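/- The ternary sum p_3(x) + 2·p_3(y) + 2·p_8(z) of generalized polygonal numbers is universal over ℤ; that is, for every nonnegative integer n there exist integers x, y, z such that p_3(x) + 2·p_3(y) + 2·p_8(z) = n. -/

import Mathlib

/-- The generalized polygonal number of order `m` evaluated at the integer `x`:
`p_m(x) = ((m-2)*x^2 - (m-4)*x) / 2` (the numerator is always even, so integer
division is exact). -/
def polygonal (m x : ℤ) : ℤ := ((m - 2) * x ^ 2 - (m - 4) * x) / 2


namespace U8

/-- Ternary quadratic form `a x² + b y² + c z² + 2d xy + 2e xz + 2f yz`. -/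
structure TF where
  a : ℤ
  b : ℤ
  c : ℤ
  d : ℤ
  e : ℤ
  f : ℤ
deriving DecidableEq

def TF.ev (A : TF) (x y z : ℤ) : ℤ :=
  A.a*x^2 + A.b*y^2 + A.c*z^2 + 2*A.d*x*y + 2*A.e*x*z + 2*A.f*y*z

def TF.det (A : TF) : ℤ :=
  A.a*(A.b*A.c - A.f^2) - A.d*(A.d*A.c - A.f*A.e) + A.e*(A.d*A.f - A.b*A.e)

/-- 3×3 integer matrix as a tuple (rows). -/
structure M3 where
  t11 : ℤ
  t12 : ℤ
  t13 : ℤ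
  t21 : ℤ
  t22 : ℤ
  t23 : ℤ
  t31 : ℤ
  t32 : ℤ
  t33 : ℤ

def M3.det (T : M3) : ℤ :=
  T.t11*(T.t22*T.t33 - T.t23*T.t32) - T.t12*(T.t21*T.t33 - T.t23*T.t31)
    + T.t13*(T.t21*T.t32 - T.t22*T.t31)

def M3.vx (T : M3) (x y z : ℤ) : ℤ := T.t11*x + T.t12*y + T.t13*z
def M3.vy (T : M3) (x y z : ℤ) : ℤ := T.t21*x + T.t22*y + T.t23*z
def M3.vz (T : M3) (x y z : ℤ) : ℤ := T.t31*x + T.t32*y + T.t33*z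

def M3.mul (T S : M3) : M3 :=
  ⟨T.t11*S.t11 + T.t12*S.t21 + T.t13*S.t31,
   T.t11*S.t12 + T.t12*S.t22 + T.t13*S.t32,
   T.t11*S.t13 + T.t12*S.t23 + T.t13*S.t33,
   T.t21*S.t11 + T.t22*S.t21 + T.t23*S.t31,
   T.t21*S.t12 + T.t22*S.t22 + T.t23*S.t32,
   T.t21*S.t13 + T.t22*S.t23 + T.t23*S.t33,
   T.t31*S.t11 + T.t32*S.t21 + T.t33*S.t31,
   T.t31*S.t12 + T.t32*S.t22 + T.t33*S.t32,
   T.t31*S.t13 + T.t32*S.t23 + T.t33*S.t33⟩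

def M3.adj (T : M3) : M3 :=
  ⟨T.t22*T.t33 - T.t23*T.t32, T.t13*T.t32 - T.t12*T.t33, T.t12*T.t23 - T.t13*T.t22,
   T.t23*T.t31 - T.t21*T.t33, T.t11*T.t33 - T.t13*T.t31, T.t13*T.t21 - T.t11*T.t23,
   T.t21*T.t32 - T.t22*T.t31, T.t12*T.t31 - T.t11*T.t32, T.t11*T.t22 - T.t12*T.t21⟩

/-- pull back the form along T : new form v ↦ A.ev (T v). Columns of T are images. -/
def TF.tr (A : TF) (T : M3) : TF :=
  ⟨A.ev T.t11 T.t21 T.t31,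
   A.ev T.t12 T.t22 T.t32,
   A.ev T.t13 T.t23 T.t33,
   A.a*T.t11*T.t12 + A.b*T.t21*T.t22 + A.c*T.t31*T.t32 + A.d*(T.t11*T.t22+T.t12*T.t21)
     + A.e*(T.t11*T.t32+T.t12*T.t31) + A.f*(T.t21*T.t32+T.t22*T.t31),
   A.a*T.t11*T.t13 + A.b*T.t21*T.t23 + A.c*T.t31*T.t33 + A.d*(T.t11*T.t23+T.t13*T.t21)
     + A.e*(T.t11*T.t33+T.t13*T.t31) + A.f*(T.t21*T.t33+T.t23*T.t31),
   A.a*T.t12*T.t13 + A.b*T.t22*T.t23 + A.c*T.t32*T.t33 + A.d*(T.t12*T.t23+T.t13*T.t22)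
     + A.e*(T.t12*T.t33+T.t13*T.t32) + A.f*(T.t22*T.t33+T.t23*T.t32)⟩

theorem TF.tr_ev (A : TF) (T : M3) (x y z : ℤ) :
    (A.tr T).ev x y z = A.ev (T.vx x y z) (T.vy x y z) (T.vz x y z) := by
  simp only [TF.ev, TF.tr, M3.vx, M3.vy, M3.vz]; ring

theorem TF.tr_det (A : TF) (T : M3) : (A.tr T).det = T.det^2 * A.det := by
  simp only [TF.det, TF.tr, M3.det, TF.ev]; ring

theorem M3.mul_adj (T : M3) : T.mul T.adj =
    ⟨T.det, 0, 0, 0, T.det, 0, 0, 0, T.det⟩ := by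
  simp only [M3.mul, M3.adj, M3.det, M3.mk.injEq]
  refine ⟨?_,?_,?_,?_,?_,?_,?_,?_,?_⟩ <;> ring

theorem TF.tr_tr (A : TF) (T S : M3) : (A.tr T).tr S = A.tr (T.mul S) := by
  simp only [TF.tr, TF.ev, M3.mul, TF.mk.injEq]
  refine ⟨?_,?_,?_,?_,?_,?_⟩ <;> ring

end U8

namespace U8

structure BF where
  a : ℤ
  b : ℤ
  c : ℤ

def BF.ev (F : BF) (x y : ℤ) : ℤ := F.a*x^2 + 2*F.b*x*y + F.c*y^2
def BF.det (F : BF) : ℤ := F.a*F.c - F.b^2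

/-- columns (p,r), (q,s) -/
def BF.tr (F : BF) (p q r s : ℤ) : BF :=
  ⟨F.ev p r, F.a*p*q + F.b*(p*s + q*r) + F.c*r*s, F.ev q s⟩

theorem BF.tr_ev (F : BF) (p q r s x y : ℤ) :
    (F.tr p q r s).ev x y = F.ev (p*x + q*y) (r*x + s*y) := by
  simp only [BF.ev, BF.tr]; ring

theorem BF.tr_det (F : BF) (p q r s : ℤ) :
    (F.tr p q r s).det = (p*s - q*r)^2 * F.det := by
  simp only [BF.det, BF.tr, BF.ev]; ring

theorem BF.tr_tr (F : BF) (p q r s p' q' r' s' : ℤ) :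
    (F.tr p q r s).tr p' q' r' s'
      = F.tr (p*p' + q*r') (p*q' + q*s') (r*p' + s*r') (r*q' + s*s') := by
  simp only [BF.tr, BF.ev, BF.mk.injEq]; refine ⟨?_, ?_, ?_⟩ <;> ring

/-- Gauss reduction for positive binary forms. -/
theorem BF.reduce : ∀ (n : ℕ) (a b c : ℤ), a.toNat ≤ n → 0 < a → 0 < a*c - b^2 →
    ∃ p q r s : ℤ, p*s - q*r = 1 ∧
      0 < ((⟨a,b,c⟩ : BF).tr p q r s).a ∧
      2*|((⟨a,b,c⟩ : BF).tr p q r s).b| ≤ ((⟨a,b,c⟩ : BF).tr p q r s).a ∧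
      ((⟨a,b,c⟩ : BF).tr p q r s).a ≤ ((⟨a,b,c⟩ : BF).tr p q r s).c := by
  intro n
  induction n with
  | zero => intro a b c h ha _; omega
  | succ n ih =>
    intro a b c h ha hd
    -- translation
    set k : ℤ := (a - 2*b) / (2*a) with hk
    have h2a : (0:ℤ) < 2*a := by omega
    have hdm := Int.mul_ediv_add_emod (a - 2*b) (2*a)
    have hr0 : 0 ≤ (a - 2*b) % (2*a) := Int.emod_nonneg _ (by omega)
    have hr1 : (a - 2*b) % (2*a) < 2*a := Int.emod_lt_of_pos _ h2a
    set b₁ : ℤ := b + k*a with hb₁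
    have hb₁b : -a < 2*b₁ ∧ 2*b₁ ≤ a := by constructor <;> nlinarith [hdm, hr0, hr1]
    set c₁ : ℤ := a*k^2 + 2*b*k + c with hc₁
    have htr1 : (⟨a,b,c⟩ : BF).tr 1 k 0 1 = ⟨a, b₁, c₁⟩ := by
      simp only [BF.tr, BF.ev, BF.mk.injEq]; refine ⟨by ring, by ring, by ring⟩
    have hd1 : a*c₁ - b₁^2 = a*c - b^2 := by simp only [hb₁, hc₁]; ring
    have hc₁pos : 0 < c₁ := by nlinarith
    by_cases hle : a ≤ c₁
    · refine ⟨1, k, 0, 1, by ring, ?_, ?_, ?_⟩ <;> rw [htr1]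
      · exact ha
      · simp only []
        rcases abs_cases b₁ with ⟨he, _⟩ | ⟨he, _⟩ <;> omega
      · exact hle
    · -- swap and recurse
      push_neg at hle
      have hd2 : 0 < c₁*a - (-b₁)^2 := by nlinarith
      obtain ⟨p, q, r, s, hdet, h1, h2, h3⟩ :=
        ih c₁ (-b₁) a (by omega) hc₁pos hd2
      have hsw : (⟨a, b₁, c₁⟩ : BF).tr 0 (-1) 1 0 = ⟨c₁, -b₁, a⟩ := by
        simp only [BF.tr, BF.ev, BF.mk.injEq]; refine ⟨by ring, by ring, by ring⟩
      have key : (⟨a,b,c⟩ : BF).tr (k*p-r) (k*q-s) p q = (⟨c₁,-b₁,a⟩ : BF).tr p q r s := by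
        simp only [BF.tr, BF.ev, BF.mk.injEq, hb₁, hc₁]
        refine ⟨by ring, by ring, by ring⟩
      refine ⟨k*p-r, k*q-s, p, q, by linear_combination hdet, ?_, ?_, ?_⟩ <;> rw [key]
      · exact h1
      · exact h2
      · exact h3

end U8

namespace U8

theorem M3.adj_mul (T : M3) : T.adj.mul T = ⟨T.det, 0, 0, 0, T.det, 0, 0, 0, T.det⟩ := by
  simp only [M3.mul, M3.adj, M3.det, M3.mk.injEq]
  refine ⟨?_,?_,?_,?_,?_,?_,?_,?_,?_⟩ <;> ring

theorem M3.mul_vx (T S : M3) (x y z : ℤ) :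
    (T.mul S).vx x y z = T.vx (S.vx x y z) (S.vy x y z) (S.vz x y z) := by
  simp only [M3.mul, M3.vx, M3.vy, M3.vz]; ring

theorem M3.mul_vy (T S : M3) (x y z : ℤ) :
    (T.mul S).vy x y z = T.vy (S.vx x y z) (S.vy x y z) (S.vz x y z) := by
  simp only [M3.mul, M3.vx, M3.vy, M3.vz]; ring

theorem M3.mul_vz (T S : M3) (x y z : ℤ) :
    (T.mul S).vz x y z = T.vz (S.vx x y z) (S.vy x y z) (S.vz x y z) := by
  simp only [M3.mul, M3.vx, M3.vy, M3.vz]; ring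

/-- a unimodular matrix kills no nonzero vector -/
theorem M3.inj (T : M3) (hdet : T.det = 1) (x y z : ℤ)
    (hx : T.vx x y z = 0) (hy : T.vy x y z = 0) (hz : T.vz x y z = 0) :
    x = 0 ∧ y = 0 ∧ z = 0 := by
  have h1 := M3.mul_vx T.adj T x y z
  have h2 := M3.mul_vy T.adj T x y z
  have h3 := M3.mul_vz T.adj T x y z
  rw [M3.adj_mul, hdet, hx, hy, hz] at h1 h2 h3
  simp only [M3.vx, M3.vy, M3.vz] at h1 h2 h3
  refine ⟨by linarith, by linarith, by linarith⟩

/-- rounding: find x with |m*x + w| ≤ m/2  -/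
theorem round_half (m w : ℤ) (hm : 0 < m) :
    ∃ x : ℤ, -m < 2*(m*x + w) ∧ 2*(m*x + w) ≤ m := by
  refine ⟨(m - 2*w) / (2*m), ?_, ?_⟩ <;>
  · have hdm := Int.mul_ediv_add_emod (m - 2*w) (2*m)
    have hr0 : 0 ≤ (m - 2*w) % (2*m) := Int.emod_nonneg _ (by omega)
    have hr1 : (m - 2*w) % (2*m) < 2*m := Int.emod_lt_of_pos _ (by omega)
    nlinarith [hdm, hr0, hr1]

/-- existence of the minimum of a positive form -/
theorem TF.exists_min (A : TF)
    (hpos : ∀ x y z : ℤ, ¬(x = 0 ∧ y = 0 ∧ z = 0) → 0 < A.ev x y z) :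
    ∃ m : ℤ, 0 < m ∧ (∃ x y z : ℤ, ¬(x = 0 ∧ y = 0 ∧ z = 0) ∧ A.ev x y z = m) ∧
      (∀ x y z : ℤ, ¬(x = 0 ∧ y = 0 ∧ z = 0) → m ≤ A.ev x y z) := by
  classical
  have hP : ∃ k : ℕ, ∃ x y z : ℤ, ¬(x = 0 ∧ y = 0 ∧ z = 0) ∧ A.ev x y z = (k : ℤ) := by
    have h1 : (0:ℤ) < A.ev 1 0 0 := hpos 1 0 0 (by simp)
    exact ⟨(A.ev 1 0 0).toNat, 1, 0, 0, by simp, by omega⟩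
  obtain ⟨x₀, y₀, z₀, hv₀, he₀⟩ := Nat.find_spec hP
  refine ⟨(Nat.find hP : ℤ), ?_, ⟨x₀, y₀, z₀, hv₀, he₀⟩, ?_⟩
  · have := hpos x₀ y₀ z₀ hv₀; omega
  · intro x y z hv
    have hpv := hpos x y z hv
    have hk : ∃ x' y' z' : ℤ, ¬(x' = 0 ∧ y' = 0 ∧ z' = 0) ∧ A.ev x' y' z' = ((A.ev x y z).toNat : ℤ) :=
      ⟨x, y, z, hv, by omega⟩
    have := Nat.find_min' hP hk
    omega

/-- completion of a primitive vector to a unimodular matrix (as first column) -/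
theorem complete_primitive (x y z : ℤ) (hgcd : Int.gcd (Int.gcd x y : ℤ) z = 1) :
    ∃ T : M3, T.det = 1 ∧ T.t11 = x ∧ T.t21 = y ∧ T.t31 = z := by
  by_cases hg : Int.gcd x y = 0
  · have hx0 : x = 0 := (Int.gcd_eq_zero_iff.mp hg).1
    have hy0 : y = 0 := (Int.gcd_eq_zero_iff.mp hg).2
    have hz : z = 1 ∨ z = -1 := by
      rw [hg] at hgcd
      have : Int.gcd 0 z = z.natAbs := by simp [Int.gcd]
      rw [show ((0:ℕ):ℤ) = (0:ℤ) from rfl] at hgcd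
      rw [this] at hgcd
      omega
    refine ⟨⟨x, 1, 0, y, 0, z, z, 0, 0⟩, ?_, rfl, rfl, rfl⟩
    rcases hz with h | h <;> simp [M3.det, hx0, hy0, h]
  · set g : ℤ := (Int.gcd x y : ℤ) with hgdef
    have hgpos : 0 < g := by
      have : 0 < Int.gcd x y := Nat.pos_of_ne_zero hg
      omega
    obtain ⟨p, hp⟩ : g ∣ x := Int.gcd_dvd_left x y
    obtain ⟨r, hr⟩ : g ∣ y := Int.gcd_dvd_right x y
    have hBez1 : g = x * Int.gcdA x y + y * Int.gcdB x y := Int.gcd_eq_gcd_ab x y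
    set a' : ℤ := Int.gcdA x y
    set b' : ℤ := Int.gcdB x y
    have hBez2 : (1:ℤ) = g * Int.gcdA g z + z * Int.gcdB g z := by
      have := Int.gcd_eq_gcd_ab g z
      rw [hgcd] at this
      exact_mod_cast this
    set s : ℤ := Int.gcdA g z
    set t : ℤ := Int.gcdB g z
    have hpr : p * a' + r * b' = 1 := by
      have h2 : g * (p * a' + r * b') = g * 1 := by
        rw [hp, hr] at hBez1; linarith [hBez1]
      exact mul_left_cancel₀ (by omega) h2
    refine ⟨⟨x, -b', -(t*p), y, a', -(t*r), z, 0, s⟩, ?_, rfl, rfl, rfl⟩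
    simp only [M3.det]
    rw [hp, hr]
    linear_combination (s*g + t*z) * hpr - hBez2

end U8

namespace U8

theorem M3.det_mul (T S : M3) : (T.mul S).det = T.det * S.det := by
  simp only [M3.mul, M3.det]; ring

theorem TF.tr_pos (A : TF) (T : M3)
    (hpos : ∀ x y z : ℤ, ¬(x = 0 ∧ y = 0 ∧ z = 0) → 0 < A.ev x y z)
    (hT : T.det = 1) :
    ∀ x y z : ℤ, ¬(x = 0 ∧ y = 0 ∧ z = 0) → 0 < (A.tr T).ev x y z := by
  intro x y z hv
  rw [TF.tr_ev]
  apply hpos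
  intro ⟨h1, h2, h3⟩
  exact hv (T.inj hT x y z h1 h2 h3)

theorem TF.tr_min (A : TF) (T : M3) (m : ℤ)
    (hmin : ∀ x y z : ℤ, ¬(x = 0 ∧ y = 0 ∧ z = 0) → m ≤ A.ev x y z)
    (hT : T.det = 1) :
    ∀ x y z : ℤ, ¬(x = 0 ∧ y = 0 ∧ z = 0) → m ≤ (A.tr T).ev x y z := by
  intro x y z hv
  rw [TF.tr_ev]
  apply hmin
  intro ⟨h1, h2, h3⟩
  exact hv (T.inj hT x y z h1 h2 h3)

set_option maxHeartbeats 1000000 in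
/-- Main reduction theorem: a positive definite integral ternary form of
determinant 2 is equivalent to x² + y² + 2z². -/
theorem TF.reduction (A : TF)
    (hpos : ∀ x y z : ℤ, ¬(x = 0 ∧ y = 0 ∧ z = 0) → 0 < A.ev x y z)
    (hdet : A.det = 2) :
    ∃ W : M3, W.det = 1 ∧ A.tr W = ⟨1, 1, 2, 0, 0, 0⟩ := by
  obtain ⟨m, hm, ⟨x₀, y₀, z₀, hv₀, he₀⟩, hmin⟩ := A.exists_min hpos
  -- the minimal vector is primitive
  have hgcd : Int.gcd (Int.gcd x₀ y₀ : ℤ) z₀ = 1 := by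
    set dn : ℕ := Int.gcd (Int.gcd x₀ y₀ : ℤ) z₀ with hdn
    have hd0 : dn ≠ 0 := by
      intro h0
      have h1 := Int.gcd_eq_zero_iff.mp h0
      have h2 := Int.gcd_eq_zero_iff.mp (by exact_mod_cast h1.1 : Int.gcd x₀ y₀ = 0)
      exact hv₀ ⟨h2.1, h2.2, h1.2⟩
    set d : ℤ := (dn : ℤ) with hd
    have hdpos : 0 < d := by
      have : 0 < dn := Nat.pos_of_ne_zero hd0
      omega
    obtain ⟨x₁, hx₁⟩ : d ∣ x₀ := dvd_trans (Int.gcd_dvd_left (Int.gcd x₀ y₀ : ℤ) z₀) (Int.gcd_dvd_left x₀ y₀)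
    obtain ⟨y₁, hy₁⟩ : d ∣ y₀ := dvd_trans (Int.gcd_dvd_left (Int.gcd x₀ y₀ : ℤ) z₀) (Int.gcd_dvd_right x₀ y₀)
    obtain ⟨z₁, hz₁⟩ : d ∣ z₀ := Int.gcd_dvd_right (Int.gcd x₀ y₀ : ℤ) z₀
    have hv₁ : ¬(x₁ = 0 ∧ y₁ = 0 ∧ z₁ = 0) := by
      intro ⟨h1, h2, h3⟩
      apply hv₀
      rw [hx₁, hy₁, hz₁, h1, h2, h3]
      simp
    have hev : A.ev x₀ y₀ z₀ = d^2 * A.ev x₁ y₁ z₁ := by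
      rw [hx₁, hy₁, hz₁]; simp only [TF.ev]; ring
    have h1 : m ≤ A.ev x₁ y₁ z₁ := hmin _ _ _ hv₁
    have h2 : d^2 * A.ev x₁ y₁ z₁ = m := by rw [← hev, he₀]
    have hdle : d ≤ 1 := by
      by_contra hgt
      push_neg at hgt
      have h4 : 4 ≤ d^2 := by nlinarith
      nlinarith
    omega
  obtain ⟨T, hTdet, hT11, hT21, hT31⟩ := complete_primitive x₀ y₀ z₀ hgcd
  set B : TF := A.tr T with hB
  have hBa : B.a = m := by
    have h : B.a = A.ev T.t11 T.t21 T.t31 := rfl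
    rw [h, hT11, hT21, hT31, he₀]
  have hBdet : B.det = 2 := by rw [hB, TF.tr_det, hTdet, hdet]; ring
  have hBpos := A.tr_pos T hpos hTdet
  have hBmin := A.tr_min T m hmin hTdet
  rw [← hB] at hBpos hBmin
  clear_value B
  clear hT11 hT21 hT31 hv₀ he₀ hgcd hmin hpos hdet
  -- the projected binary form
  set G : BF := ⟨m*B.b - B.d^2, m*B.f - B.d*B.e, m*B.c - B.e^2⟩ with hG
  have hkey : ∀ x y z : ℤ, m * B.ev x y z = (m*x + B.d*y + B.e*z)^2 + G.ev y z := by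
    intro x y z
    simp only [hG, TF.ev, BF.ev]
    linear_combination (m*x^2) * hBa
  have hGdet : G.det = 2*m := by
    have h1 : G.det = m * B.det := by
      simp only [hG, BF.det, TF.det]
      linear_combination (-(m*(B.b*B.c - B.f^2))) * hBa
    rw [h1, hBdet]; ring
  clear_value G
  have hGval : ∀ y z : ℤ, ¬(y = 0 ∧ z = 0) → 3*m^2 ≤ 4 * G.ev y z := by
    intro y z hyz
    obtain ⟨x', hL1, hL2⟩ := round_half m (B.d*y + B.e*z) hm
    have hBv : m ≤ B.ev x' y z := hBmin x' y z (by tauto)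
    have hk := hkey x' y z
    nlinarith [hk, hBv, hL1, hL2]
  have hGa : 0 < G.a := by
    have h2 := hGval 1 0 (by simp)
    have h1 : G.ev 1 0 = G.a := by simp only [BF.ev]; ring
    nlinarith
  -- reduce G to find its minimum
  obtain ⟨p, q, r, s, hPdet, hF1a, hF1b, hF1c⟩ :=
    BF.reduce G.a.toNat G.a G.b G.c le_rfl hGa (by
      have h : G.a * G.c - G.b^2 = G.det := rfl
      rw [h, hGdet]; omega)
  have hGeta : (⟨G.a, G.b, G.c⟩ : BF) = G := rfl
  rw [hGeta] at hF1a hF1b hF1c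
  set F₁ : BF := G.tr p q r s with hF₁
  have hF₁det : F₁.a * F₁.c - F₁.b^2 = 2*m := by
    have h1 : F₁.a * F₁.c - F₁.b^2 = F₁.det := rfl
    rw [h1, hF₁, BF.tr_det, hPdet, hGdet]; ring
  have hF₁aval : F₁.a = G.ev p r := rfl
  clear_value F₁
  have hmin3 : 3 * F₁.a^2 ≤ 8 * m := by
    have habs : 4 * F₁.b^2 ≤ F₁.a^2 := by
      have h1 : (2*|F₁.b|)^2 ≤ F₁.a^2 :=
        sq_le_sq' (by nlinarith [abs_nonneg F₁.b]) hF1b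
      have h2 : (2*|F₁.b|)^2 = 4*F₁.b^2 := by rw [mul_pow, sq_abs]; ring
      linarith
    nlinarith [hF1c, hF₁det, hF1a]
  have hpr : ¬(p = 0 ∧ r = 0) := by
    intro ⟨h1, h2⟩; rw [h1, h2] at hPdet; simp at hPdet
  have hmin4 : 3 * m^2 ≤ 4 * F₁.a := by
    rw [hF₁aval]; exact hGval p r hpr
  have hm1 : m = 1 := by
    by_contra hne
    have hm2 : 2 ≤ m := by omega
    have ha3 : 3*m ≤ 2*F₁.a := by nlinarith [hmin4, hm2]
    have h9 : 9*m^2 ≤ 4*F₁.a^2 := by nlinarith [ha3, hm]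
    nlinarith [hmin3, h9, hm2]
  -- clear the first row/column
  rw [hm1] at hBa
  set U : M3 := ⟨1, -B.d, -B.e, 0, 1, 0, 0, 0, 1⟩ with hU
  have hUdet : U.det = 1 := by simp [hU, M3.det]
  set C : TF := B.tr U with hC
  have hCa : C.a = 1 := by
    have h : C.a = B.ev 1 0 0 := rfl
    rw [h]; simp only [TF.ev]; linear_combination hBa
  have hCd : C.d = 0 := by
    have h : C.d = B.a*1*(-B.d) + B.b*0*1 + B.c*0*0 + B.d*(1*1 + (-B.d)*0)
        + B.e*(1*0 + (-B.d)*0) + B.f*(0*0 + 1*0) := rfl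
    rw [h]; linear_combination (-B.d) * hBa
  have hCe : C.e = 0 := by
    have h : C.e = B.a*1*(-B.e) + B.b*0*0 + B.c*0*1 + B.d*(1*0 + (-B.e)*0)
        + B.e*(1*1 + (-B.e)*0) + B.f*(0*1 + 0*0) := rfl
    rw [h]; linear_combination (-B.e) * hBa
  have hCdet : C.det = 2 := by rw [hC, TF.tr_det, hUdet, hBdet]; ring
  have hCpos := B.tr_pos U hBpos hUdet
  rw [← hC] at hCpos
  clear_value C
  clear hkey hGval hBpos hBmin hBa hBdet
  -- the bottom binary block
  set H : BF := ⟨C.b, C.f, C.c⟩ with hH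
  have hHval : ∀ y z : ℤ, H.ev y z = C.ev 0 y z := by
    intro y z; simp only [hH, BF.ev, TF.ev]; ring
  have hHdet : H.a * H.c - H.b^2 = 2 := by
    have h := hCdet
    simp only [TF.det] at h
    rw [hCa, hCd, hCe] at h
    simp only [hH]
    linear_combination h
  have hHa : 0 < H.a := by
    have h1 : H.a = H.ev 1 0 := by simp only [BF.ev]; ring
    rw [h1, hHval 1 0]
    exact hCpos 0 1 0 (by simp)
  clear_value H
  obtain ⟨p', q', r', s', hP2det, hF2a, hF2b, hF2c⟩ :=
    BF.reduce H.a.toNat H.a H.b H.c le_rfl hHa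
      (by rw [show H.a*H.c - H.b^2 = 2 from hHdet]; norm_num)
  have hHeta : (⟨H.a, H.b, H.c⟩ : BF) = H := rfl
  rw [hHeta] at hF2a hF2b hF2c
  set F₂ : BF := H.tr p' q' r' s' with hF₂
  have hF₂det : F₂.a * F₂.c - F₂.b^2 = 2 := by
    have h1 : F₂.a * F₂.c - F₂.b^2 = F₂.det := rfl
    rw [h1, hF₂, BF.tr_det, hP2det]
    rw [show H.det = H.a*H.c - H.b^2 from rfl, hHdet]; ring
  have hF₂aH : F₂.a = H.ev p' r' := rfl
  have hF₂cH : F₂.c = H.ev q' s' := rfl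
  have hF₂bH : F₂.b = H.a*p'*q' + H.b*(p'*s' + q'*r') + H.c*r'*s' := rfl
  clear_value F₂
  have habs2 : 4 * F₂.b^2 ≤ F₂.a^2 := by
    have h1 : (2*|F₂.b|)^2 ≤ F₂.a^2 :=
      sq_le_sq' (by nlinarith [abs_nonneg F₂.b]) hF2b
    have h2 : (2*|F₂.b|)^2 = 4*F₂.b^2 := by rw [mul_pow, sq_abs]; ring
    linarith
  have h3 : 3*F₂.a^2 ≤ 8 := by nlinarith [hF2c, hF₂det, habs2]
  have hF₂a1 : F₂.a = 1 := by
    have h4 : F₂.a ≤ 1 := by nlinarith [h3, hF2a]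
    omega
  have hF₂b0 : F₂.b = 0 := by
    have h5 : F₂.b^2 ≤ 0 := by nlinarith [habs2, hF₂a1]
    have h6 : F₂.b^2 = 0 := le_antisymm h5 (sq_nonneg _)
    exact pow_eq_zero_iff (by norm_num) |>.mp h6
  have hF₂c2 : F₂.c = 2 := by
    rw [hF₂a1, hF₂b0] at hF₂det; linarith
  -- assemble the final transformation
  set V : M3 := ⟨1, 0, 0, 0, p', q', 0, r', s'⟩ with hV
  have hVdet : V.det = 1 := by
    simp only [hV, M3.det]; linear_combination hP2det
  set D : TF := C.tr V with hD
  have hDeq : D = ⟨1, 1, 2, 0, 0, 0⟩ := by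
    have e1 : D.a = C.ev 1 0 0 := rfl
    have e2 : D.b = C.ev 0 p' r' := rfl
    have e3 : D.c = C.ev 0 q' s' := rfl
    have e4 : D.d = C.a*1*0 + C.b*0*p' + C.c*0*r' + C.d*(1*p' + 0*0)
        + C.e*(1*r' + 0*0) + C.f*(0*r' + p'*0) := rfl
    have e5 : D.e = C.a*1*0 + C.b*0*q' + C.c*0*s' + C.d*(1*q' + 0*0)
        + C.e*(1*s' + 0*0) + C.f*(0*s' + q'*0) := rfl
    have e6 : D.f = C.a*0*0 + C.b*p'*q' + C.c*r'*s' + C.d*(0*q' + 0*p')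
        + C.e*(0*s' + 0*r') + C.f*(p'*s' + q'*r') := rfl
    have hfa : D.a = 1 := by
      rw [e1]; simp only [TF.ev]; linear_combination hCa
    have hfb : D.b = 1 := by
      rw [e2, ← hHval p' r', ← hF₂aH, hF₂a1]
    have hfc : D.c = 2 := by
      rw [e3, ← hHval q' s', ← hF₂cH, hF₂c2]
    have hfd : D.d = 0 := by
      rw [e4]; linear_combination p' * hCd + r' * hCe
    have hfe : D.e = 0 := by
      rw [e5]; linear_combination q' * hCd + s' * hCe
    have hff : D.f = 0 := by
      rw [e6]
      have h : H.a*p'*q' + H.b*(p'*s' + q'*r') + H.c*r'*s' = 0 := by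
        rw [← hF₂bH, hF₂b0]
      simp only [hH] at h
      linear_combination h
    have hDsplit : D = ⟨D.a, D.b, D.c, D.d, D.e, D.f⟩ := rfl
    rw [hDsplit, hfa, hfb, hfc, hfd, hfe, hff]
  refine ⟨(T.mul U).mul V, ?_, ?_⟩
  · rw [M3.det_mul, M3.det_mul, hTdet, hUdet, hVdet]; norm_num
  · rw [← TF.tr_tr, ← TF.tr_tr, ← hB, ← hC, ← hD, hDeq]

end U8

namespace U8

private lemma sq_pos' (a : ℤ) (h : a ≠ 0) : 0 < a^2 := by
  rcases lt_or_gt_of_ne h with h'|h' <;> nlinarith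

private lemma aux_Dlt (Nn Dn q : ℕ) (h1 : 25 ≤ Nn) (h2 : Nn*Dn = q+2) (h3 : 8*Nn < q) :
    Dn < q := by nlinarith

private lemma aux_Epos (q E β D : ℤ) (h : q*E = β^2 + D) (hq : 0 < q) (hD : 0 < D) :
    0 < E := by nlinarith [sq_nonneg β]

private lemma aux_cancel (q D V : ℤ) (hq : 0 < q) (hD : 0 < D) (h : 0 < q*D*V) :
    0 < V := by
  by_contra hle
  push_neg at hle
  have hqd : 0 < q*D := mul_pos hq hD
  have h2 : q*D*V ≤ 0 := mul_nonpos_of_nonneg_of_nonpos hqd.le hle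
  linarith

theorem TF.tr_id (A : TF) : A.tr ⟨1, 0, 0, 0, 1, 0, 0, 0, 1⟩ = A := by
  rcases A with ⟨a, b, c, d, e, f⟩
  simp only [TF.tr, TF.ev, TF.mk.injEq]
  refine ⟨by ring, by ring, by ring, by ring, by ring, by ring⟩

set_option maxHeartbeats 1000000 in
/-- Every N = 24n+25 is x² + y² + 2z², nondegenerately. -/
theorem rep112 (n : ℕ) :
    ∃ x y z : ℤ, (24*(n:ℤ) + 25) = x^2 + y^2 + 2*z^2 ∧
      ¬(y = 0 ∧ z = 0) ∧ ¬(x = 0 ∧ z = 0) := by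
  set Nn : ℕ := 24*n + 25 with hNn
  set N : ℤ := (Nn : ℤ) with hN
  have hNge : (25:ℕ) ≤ Nn := by omega
  have hN25 : (25:ℤ) ≤ N := by rw [hN]; exact_mod_cast hNge
  have hNmod : Nn % 8 = 1 := by omega
  have hNodd : Nn % 2 = 1 := by omega
  have hcop : Nat.Coprime 8 Nn := by
    have h2 : Nat.Coprime 2 Nn := Nat.coprime_two_left.mpr (Nat.odd_iff.mpr hNodd)
    exact Nat.Coprime.pow_left 3 h2
  obtain ⟨r, hr8, hrN⟩ := Nat.chineseRemainder hcop 1 (Nn - 2)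
  have hr8' : r % 8 = 1 := by
    have h := hr8; simp only [Nat.ModEq] at h; omega
  have hmlt : (Nn - 2) % Nn = Nn - 2 := Nat.mod_eq_of_lt (by omega)
  have hrN' : r % Nn = Nn - 2 := by
    have h := hrN; simp only [Nat.ModEq] at h
    rw [hmlt] at h; exact h
  have hrcop : Nat.Coprime r (8 * Nn) := by
    have hc8 : Nat.Coprime r 8 := by
      have hodd : r % 2 = 1 := by omega
      have h2' : Nat.Coprime 2 r := Nat.coprime_two_left.mpr (Nat.odd_iff.mpr hodd)
      exact (Nat.Coprime.pow_left 3 h2').symm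
    have hcN : Nat.Coprime r Nn := by
      have hg1 : Nat.gcd r Nn ∣ Nn := Nat.gcd_dvd_right _ _
      have hg2 : Nat.gcd r Nn ∣ r := Nat.gcd_dvd_left _ _
      have hg3 : Nat.gcd r Nn ∣ r % Nn := (Nat.dvd_mod_iff hg1).mpr hg2
      rw [hrN'] at hg3
      have hdvd2 : Nat.gcd r Nn ∣ 2 := by
        have h4 : Nat.gcd r Nn ∣ Nn - (Nn - 2) := Nat.dvd_sub hg1 hg3
        rwa [Nat.sub_sub_self (by omega)] at h4
      rcases (Nat.dvd_prime Nat.prime_two).mp hdvd2 with h | h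
      · exact h
      · exfalso
        have h5 : (2:ℕ) ∣ Nn := h ▸ hg1
        omega
    exact Nat.Coprime.mul_right hc8 hcN
  haveI : NeZero (8 * Nn) := ⟨by omega⟩
  have hunit : IsUnit ((r : ZMod (8 * Nn))) := (ZMod.isUnit_iff_coprime r (8 * Nn)).mpr hrcop
  obtain ⟨q, hqgt, hqprime, hqmod⟩ := Nat.forall_exists_prime_gt_and_eq_mod hunit (8 * Nn)
  haveI fq : Fact q.Prime := ⟨hqprime⟩
  have hqr : q ≡ r [MOD 8 * Nn] := (ZMod.natCast_eq_natCast_iff _ _ _).mp hqmod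
  have hq8 : q % 8 = 1 := by
    have h : q % 8 = r % 8 := hqr.of_dvd ⟨Nn, rfl⟩
    omega
  have hqN : q % Nn = Nn - 2 := by
    have h : q % Nn = r % Nn := hqr.of_dvd ⟨8, by ring⟩
    rw [← hrN']; exact h
  have hqbig : 8 * Nn < q := hqgt
  have hq2 : q ≠ 2 := by omega
  have hqodd : Odd q := by rw [Nat.odd_iff]; omega
  have hdvdq : Nn ∣ q + 2 := by
    have h1 : q ≡ Nn - 2 [MOD Nn] := by
      show q % Nn = (Nn - 2) % Nn
      rw [hqN, hmlt]
    have h2 : q + 2 ≡ (Nn - 2) + 2 [MOD Nn] := Nat.ModEq.add_right 2 h1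
    have h3 : (Nn - 2) + 2 = Nn := by omega
    rw [h3] at h2
    have h4 : q + 2 ≡ 0 [MOD Nn] := h2.trans (Nat.modEq_zero_iff_dvd.mpr dvd_rfl)
    exact Nat.modEq_zero_iff_dvd.mp h4
  set Dn : ℕ := (q + 2) / Nn with hDn
  have hDN : Nn * Dn = q + 2 := Nat.mul_div_cancel' hdvdq
  have hDpos : 0 < Dn := by
    rcases Nat.eq_zero_or_pos Dn with h | h
    · rw [h, Nat.mul_zero] at hDN; omega
    · exact h
  have hDlt : Dn < q := aux_Dlt Nn Dn q hNge hDN hqbig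
  -- Legendre symbol computations
  have hq2' : q % 2 = 1 := by omega
  have hleg2 : legendreSym q 2 = 1 := by
    rw [legendreSym.at_two hq2, ZMod.χ₈_nat_eq_if_mod_eight]
    simp [hq2', hq8]
  have hlegneg1 : legendreSym q (-1) = 1 := by
    rw [legendreSym.at_neg_one hq2, ZMod.χ₄_nat_one_mod_four (by omega : q % 4 = 1)]
  have hlegN : legendreSym q (Nn : ℤ) = 1 := by
    rw [jacobiSym.legendreSym.to_jacobiSym]
    rw [jacobiSym.quadratic_reciprocity_one_mod_four (by omega : Nn % 4 = 1) hqodd]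
    have hmodl : ((q : ℤ)) % (Nn : ℤ) = (-2) % (Nn : ℤ) := by
      have h1 : ((q : ℕ) : ℤ) % ((Nn : ℕ) : ℤ) = (((q % Nn : ℕ)) : ℤ) :=
        (Int.natCast_mod q Nn).symm
      have h2 : ((Nn - 2 : ℕ) : ℤ) = (Nn : ℤ) - 2 := by
        have : (2:ℕ) ≤ Nn := by omega
        push_cast [this]
        ring
      rw [h1, hqN, h2]
      have hNN : (25:ℤ) ≤ (Nn:ℤ) := by exact_mod_cast hNge
      have e2 : (-2 : ℤ) % (Nn:ℤ) = ((Nn:ℤ) - 2) % (Nn:ℤ) := by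
        conv_lhs => rw [show (-2:ℤ) = (Nn:ℤ) - 2 + (Nn:ℤ)*(-1) by ring]
        rw [Int.add_mul_emod_self_left]
      rw [e2, Int.emod_eq_of_lt (by linarith) (by linarith)]
    rw [jacobiSym.mod_left' hmodl]
    rw [show (-2 : ℤ) = -1 * 2 by norm_num, jacobiSym.mul_left]
    rw [jacobiSym.at_neg_one (Nat.odd_iff.mpr hNodd), jacobiSym.at_two (Nat.odd_iff.mpr hNodd)]
    rw [ZMod.χ₄_nat_one_mod_four (by omega : Nn % 4 = 1), ZMod.χ₈_nat_eq_if_mod_eight]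
    simp [hNodd, hNmod]
  have hlegD : legendreSym q (Dn : ℤ) = 1 := by
    have hval : ((Dn : ℤ) * (Nn : ℤ)) = (q : ℤ) + 2 := by
      have h' : Dn * Nn = q + 2 := by rw [Nat.mul_comm]; exact hDN
      exact_mod_cast h'
    have hprod : legendreSym q ((Dn : ℤ) * (Nn : ℤ)) = legendreSym q 2 := by
      rw [hval, legendreSym.mod q ((q : ℤ) + 2), legendreSym.mod q 2]
      congr 1
      rw [show ((q:ℤ) + 2) = 2 + (q:ℤ)*1 by ring, Int.add_mul_emod_self_left]
    rw [legendreSym.mul, hlegN, hleg2] at hprod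
    linarith
  have hlegnegD : legendreSym q (-(Dn : ℤ)) = 1 := by
    rw [show (-(Dn:ℤ)) = -1 * (Dn:ℤ) by ring, legendreSym.mul, hlegneg1, hlegD]
    norm_num
  have hDnot0 : ((-(Dn : ℤ) : ℤ) : ZMod q) ≠ 0 := by
    rw [Ne, ZMod.intCast_zmod_eq_zero_iff_dvd]
    intro hdvd
    rw [dvd_neg] at hdvd
    have h2 : q ∣ Dn := by exact_mod_cast hdvd
    have := Nat.le_of_dvd hDpos h2
    omega
  obtain ⟨sroot, hsroot⟩ := (legendreSym.eq_one_iff q hDnot0).mp hlegnegD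
  set β : ℤ := (sroot.val : ℤ) with hβ
  have hβcast : ((β : ℤ) : ZMod q) = sroot := by
    rw [hβ]
    push_cast
    rw [ZMod.natCast_val, ZMod.cast_id]
  have hqdvd : (q : ℤ) ∣ β^2 + (Dn : ℤ) := by
    rw [← ZMod.intCast_zmod_eq_zero_iff_dvd]
    push_cast
    rw [hβcast]
    have h7 : (sroot : ZMod q) * sroot = ((-(Dn:ℤ) : ℤ) : ZMod q) := hsroot.symm
    rw [sq, h7]
    push_cast
    ring
  obtain ⟨E, hE⟩ := hqdvd
  have hqE : (q:ℤ) * E = β^2 + (Dn:ℤ) := hE.symm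
  have hq0 : (0:ℤ) < q := by exact_mod_cast hqprime.pos
  have hD0 : (0:ℤ) < (Dn:ℤ) := by exact_mod_cast hDpos
  have hEpos : 0 < E := aux_Epos (q:ℤ) E β (Dn:ℤ) hqE hq0 hD0
  have hNDint : N * (Dn : ℤ) = (q : ℤ) + 2 := by
    rw [hN]; exact_mod_cast hDN
  -- the ternary form
  set A : TF := ⟨E, (q:ℤ), N, -β, 1, 0⟩ with hA
  have hdetA : A.det = 2 := by
    simp only [hA, TF.det]
    linear_combination N * hqE + hNDint
  have hid : ∀ x y z : ℤ, (q:ℤ)*(Dn:ℤ)*(A.ev x y z)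
      = (Dn:ℤ)*((q:ℤ)*y - β*x)^2 + ((Dn:ℤ)*x + (q:ℤ)*z)^2 + 2*(q:ℤ)*z^2 := by
    intro x y z
    simp only [hA, TF.ev]
    linear_combination ((Dn:ℤ)*x^2) * hqE + ((q:ℤ)*z^2) * hNDint
  have hposA : ∀ x y z : ℤ, ¬(x = 0 ∧ y = 0 ∧ z = 0) → 0 < A.ev x y z := by
    intro x y z hv
    have hidv := hid x y z
    have s1 : 0 ≤ (Dn:ℤ)*((q:ℤ)*y - β*x)^2 := by positivity
    have s2 : 0 ≤ ((Dn:ℤ)*x + (q:ℤ)*z)^2 := sq_nonneg _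
    have s3 : 0 ≤ 2*(q:ℤ)*z^2 := by positivity
    have hbig : 0 < (q:ℤ)*(Dn:ℤ)*(A.ev x y z) := by
      rcases eq_or_ne z 0 with hz | hz
      · rcases eq_or_ne x 0 with hx | hx
        · have hy : y ≠ 0 := by tauto
          subst hz; subst hx
          have ht : 0 < (Dn:ℤ)*((q:ℤ)*y - β*0)^2 := by
            apply mul_pos hD0
            apply sq_pos'
            simpa using mul_ne_zero (ne_of_gt hq0) hy
          linarith [hidv, s2, s3, ht]
        · subst hz
          have ht : 0 < ((Dn:ℤ)*x + (q:ℤ)*0)^2 := by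
            apply sq_pos'
            simpa using mul_ne_zero (ne_of_gt hD0) hx
          linarith [hidv, s1, s3, ht]
      · have ht : 0 < 2*(q:ℤ)*z^2 := by
          have h2q : (0:ℤ) < 2*(q:ℤ) := by linarith
          exact mul_pos h2q (sq_pos' z hz)
        linarith [hidv, s1, s2, ht]
    exact aux_cancel (q:ℤ) (Dn:ℤ) (A.ev x y z) hq0 hD0 hbig
  -- reduce and read off the representation
  obtain ⟨W, hWdet, hWeq⟩ := A.reduction hposA hdetA
  have hAS : (⟨1,1,2,0,0,0⟩ : TF).tr W.adj = A := by
    have h1 := TF.tr_tr A W W.adj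
    rw [M3.mul_adj, hWdet, TF.tr_id, hWeq] at h1
    exact h1
  set S : M3 := W.adj with hS
  have hc : N = S.t13^2 + S.t23^2 + 2*S.t33^2 := by
    have h2 := congrArg TF.c hAS
    have h3 : ((⟨1,1,2,0,0,0⟩ : TF).tr S).c = (⟨1,1,2,0,0,0⟩ : TF).ev S.t13 S.t23 S.t33 := rfl
    have h4 : A.c = N := rfl
    rw [h3, h4] at h2
    rw [← h2]
    simp only [TF.ev]
    ring
  have he1 : S.t11*S.t13 + S.t21*S.t23 + 2*(S.t31*S.t33) = 1 := by
    have h2 := congrArg TF.e hAS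
    have h3 : ((⟨1,1,2,0,0,0⟩ : TF).tr S).e
        = 1*S.t11*S.t13 + 1*S.t21*S.t23 + 2*S.t31*S.t33
          + 0*(S.t11*S.t23+S.t13*S.t21) + 0*(S.t11*S.t33+S.t13*S.t31)
          + 0*(S.t21*S.t33+S.t23*S.t31) := rfl
    have h4 : A.e = 1 := rfl
    rw [h3, h4] at h2
    linear_combination h2
  have hNval : N = 24*(n:ℤ) + 25 := by rw [hN, hNn]; push_cast; ring
  refine ⟨S.t13, S.t23, S.t33, by rw [← hNval]; exact hc, ?_, ?_⟩
  · intro ⟨hy0, hz0⟩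
    rw [hy0, hz0] at hc he1
    have hmul : S.t13 * S.t11 = 1 := by linear_combination he1
    rcases Int.isUnit_iff.mp (IsUnit.of_mul_eq_one _ hmul) with h | h <;>
      rw [h] at hc <;> norm_num at hc <;> omega
  · intro ⟨hx0, hz0⟩
    rw [hx0, hz0] at hc he1
    have hmul : S.t23 * S.t21 = 1 := by linear_combination he1
    rcases Int.isUnit_iff.mp (IsUnit.of_mul_eq_one _ hmul) with h | h <;>
      rw [h] at hc <;> norm_num at hc <;> omega

end U8

namespace U8

private lemma sq3 (a : ℤ) : (a^2 % 3 = 0 ∧ 3 ∣ a) ∨ (a^2 % 3 = 1 ∧ ¬3 ∣ a) := by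
  have h : a^2 % 3 = (a % 3) * (a % 3) % 3 := by rw [sq, Int.mul_emod]
  have h3 : a % 3 = 0 ∨ a % 3 = 1 ∨ a % 3 = 2 := by omega
  rcases h3 with h'|h'|h' <;> rw [h'] at h <;> norm_num at h <;> omega

private lemma sqmod8 (a : ℤ) :
    (a % 2 = 0 ∧ (a^2 % 8 = 0 ∨ a^2 % 8 = 4)) ∨ (a % 2 = 1 ∧ a^2 % 8 = 1) := by
  have h : a^2 % 8 = (a % 8) * (a % 8) % 8 := by rw [sq, Int.mul_emod]
  have h8 : a % 8 = 0 ∨ a % 8 = 1 ∨ a % 8 = 2 ∨ a % 8 = 3 ∨ a % 8 = 4 ∨ a % 8 = 5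
      ∨ a % 8 = 6 ∨ a % 8 = 7 := by omega
  rcases h8 with h'|h'|h'|h'|h'|h'|h'|h' <;> rw [h'] at h <;> norm_num at h <;> omega

private lemma sqmod4 (a : ℤ) :
    (a % 2 = 0 ∧ a^2 % 4 = 0) ∨ (a % 2 = 1 ∧ a^2 % 4 = 1) := by
  have h : a^2 % 4 = (a % 4) * (a % 4) % 4 := by rw [sq, Int.mul_emod]
  have h4 : a % 4 = 0 ∨ a % 4 = 1 ∨ a % 4 = 2 ∨ a % 4 = 3 := by omega
  rcases h4 with h'|h'|h'|h' <;> rw [h'] at h <;> norm_num at h <;> omega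

/-- 2-adic massage: N ≡ 1 mod 8 represented by x²+y²+2z² is represented by
u² + 2v² + 16c², preserving nondegeneracy. -/
private lemma massage (N x y z : ℤ) (hN8 : N % 8 = 1) (h : N = x^2 + y^2 + 2*z^2)
    (h1 : ¬(y = 0 ∧ z = 0)) (h2 : ¬(x = 0 ∧ z = 0)) :
    ∃ u v c : ℤ, N = u^2 + 2*v^2 + 16*c^2 ∧ ¬(v = 0 ∧ c = 0) := by
  rcases sqmod8 x with ⟨hx2, hxs⟩ | ⟨hx2, hxs⟩ <;>
    rcases sqmod8 y with ⟨hy2, hys⟩ | ⟨hy2, hys⟩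
  · -- both even: N even, contradiction
    exfalso
    rcases sqmod4 z with ⟨hz2, hzs⟩ | ⟨hz2, hzs⟩ <;> omega
  · -- x even, y odd
    -- z is even
    have hz2 : z % 2 = 0 := by
      rcases sqmod4 z with ⟨hz2, hzs⟩ | ⟨hz2, hzs⟩
      · exact hz2
      · exfalso; omega
    obtain ⟨z₁, hz₁⟩ : (2:ℤ) ∣ z := by omega
    obtain ⟨x₁, hx₁⟩ : (2:ℤ) ∣ x := by omega
    have h' : N = y^2 + 4*x₁^2 + 8*z₁^2 := by
      rw [h, hx₁, hz₁]; ring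
    have hx₁2 : x₁ % 2 = 0 := by
      rcases sqmod4 x₁ with ⟨ha, hb⟩ | ⟨ha, hb⟩
      · exact ha
      · exfalso; omega
    obtain ⟨x₂, hx₂⟩ : (2:ℤ) ∣ x₁ := by omega
    have hx4 : x = 4*x₂ := by omega
    refine ⟨y, z, x₂, by rw [h, hx4]; ring, ?_⟩
    intro ⟨ha, hb⟩
    exact h2 ⟨by omega, ha⟩
  · -- x odd, y even
    have hz2 : z % 2 = 0 := by
      rcases sqmod4 z with ⟨hz2, hzs⟩ | ⟨hz2, hzs⟩
      · exact hz2
      · exfalso; omega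
    obtain ⟨z₁, hz₁⟩ : (2:ℤ) ∣ z := by omega
    obtain ⟨y₁, hy₁⟩ : (2:ℤ) ∣ y := by omega
    have h' : N = x^2 + 4*y₁^2 + 8*z₁^2 := by
      rw [h, hy₁, hz₁]; ring
    have hy₁2 : y₁ % 2 = 0 := by
      rcases sqmod4 y₁ with ⟨ha, hb⟩ | ⟨ha, hb⟩
      · exact ha
      · exfalso; omega
    obtain ⟨y₂, hy₂⟩ : (2:ℤ) ∣ y₁ := by omega
    have hy4 : y = 4*y₂ := by omega
    refine ⟨x, z, y₂, by rw [h, hy4]; ring, ?_⟩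
    intro ⟨ha, hb⟩
    exact h1 ⟨by omega, ha⟩
  · -- both odd: impossible mod 8
    exfalso
    rcases sqmod4 z with ⟨hz2, hzs⟩ | ⟨hz2, hzs⟩ <;> omega

/-- 3-adic descent for the binary form 2v² + 16c². -/
private lemma descend3 : ∀ (k : ℕ) (m v c : ℤ), m.toNat ≤ k → m = 2*v^2 + 16*c^2 →
    0 < m → m % 3 ≠ 2 → ∃ v₀ c₀ : ℤ, m = 2*v₀^2 + 16*c₀^2 ∧ ¬(3:ℤ) ∣ c₀ := by
  intro k
  induction k with
  | zero => intro m v c hk _ hm _; omega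
  | succ k ih =>
    intro m v c hk hrep hm h3
    by_cases hc3 : (3:ℤ) ∣ c
    · by_cases hv3 : (3:ℤ) ∣ v
      · obtain ⟨v', hv'⟩ := hv3
        obtain ⟨c', hc'⟩ := hc3
        set m₁ : ℤ := 2*v'^2 + 16*c'^2 with hm₁
        have hm9 : m = 9*m₁ := by rw [hrep, hv', hc', hm₁]; ring
        have hm₁pos : 0 < m₁ := by omega
        by_cases hm₁2 : m₁ % 3 = 2
        · -- 3 ∤ v' and 3 ∣ c', lift directly
          have s1 := sq3 v'
          have s2 := sq3 c'
          have hkey : ¬(3:ℤ) ∣ v' ∧ (3:ℤ) ∣ c' := by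
            constructor <;> omega
          refine ⟨v' - 8*c', v' + c', by rw [hm9, hm₁]; ring, by omega⟩
        · obtain ⟨w, d, hwd, hd3⟩ := ih m₁ v' c' (by omega) rfl hm₁pos hm₁2
          by_cases hl : (3:ℤ) ∣ (w + d)
          · refine ⟨w + 8*d, w - d, by rw [hm9, hwd]; ring, by omega⟩
          · refine ⟨w - 8*d, w + d, by rw [hm9, hwd]; ring, hl⟩
      · -- 3∣c, 3∤v forces m ≡ 2 mod 3
        exfalso
        have s1 := sq3 v
        have s2 := sq3 c
        omega
    · exact ⟨v, c, hrep, hc3⟩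

private lemma poly3_val (t k : ℤ) (h : t^2 + t = 2*k) : polygonal 3 t = k := by
  unfold polygonal
  rw [show (3-2)*t^2 - (3-4)*t = 2*k by linear_combination h]
  exact Int.mul_ediv_cancel_left k (by norm_num)

private lemma poly8_val (t : ℤ) : polygonal 8 t = 3*t^2 - 2*t := by
  unfold polygonal
  rw [show ((8:ℤ)-2)*t^2 - (8-4)*t = 2*(3*t^2 - 2*t) by ring]
  exact Int.mul_ediv_cancel_left _ (by norm_num)

end U8

theorem universal_stmt_8 :
    ∀ n : ℕ, ∃ x y z : ℤ, polygonal 3 x + 2 * polygonal 3 y + 2 * polygonal 8 z = n := by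
  intro n
  obtain ⟨X, Y, Z, hXYZ, hnd1, hnd2⟩ := U8.rep112 n
  set N : ℤ := 24*(n:ℤ) + 25 with hNdef
  have hN8 : N % 8 = 1 := by omega
  have hN3 : N % 3 = 1 := by omega
  obtain ⟨u, v, c, hrep, hvc⟩ := U8.massage N X Y Z hN8 hXYZ hnd1 hnd2
  obtain ⟨v₀, c₀, hrep₀, hc₀⟩ :
      ∃ v₀ c₀ : ℤ, N = u^2 + 2*v₀^2 + 16*c₀^2 ∧ ¬(3:ℤ) ∣ c₀ := by
    by_cases hc3 : (3:ℤ) ∣ c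
    · have s_u := U8.sq3 u
      have s_v := U8.sq3 v
      have s_c := U8.sq3 c
      have h3v : (3:ℤ) ∣ v := by omega
      have hm : N - u^2 = 2*v^2 + 16*c^2 := by linear_combination hrep
      have hmpos : 0 < N - u^2 := by
        rcases not_and_or.mp hvc with hv | hc
        · have h1 : 0 < v^2 := U8.sq_pos' v hv
          have h2 : 0 ≤ c^2 := sq_nonneg c
          linarith [hm]
        · have h1 : 0 < c^2 := U8.sq_pos' c hc
          have h2 : 0 ≤ v^2 := sq_nonneg v
          linarith [hm]
      have hm3 : (N - u^2) % 3 ≠ 2 := by omega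
      obtain ⟨v₀, c₀, hvc₀, hc₀⟩ :=
        U8.descend3 (N - u^2).toNat (N - u^2) v c le_rfl hm hmpos hm3
      exact ⟨v₀, c₀, by linear_combination hvc₀, hc₀⟩
    · exact ⟨v, c, hrep, hc3⟩
  have s_u := U8.sq3 u
  have s_v := U8.sq3 v₀
  have s_c := U8.sq3 c₀
  have hdd : (3:ℤ) ∣ (u - v₀)*(u + v₀) := by
    have he : (u - v₀)*(u + v₀) = u^2 - v₀^2 := by ring
    rw [he]
    omega
  have hsign := (Int.prime_three.dvd_mul.mp hdd)
  obtain ⟨v₁, hv₁rep, hv₁d⟩ :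
      ∃ v₁ : ℤ, N = u^2 + 2*v₁^2 + 16*c₀^2 ∧ (3:ℤ) ∣ (u - v₁) := by
    rcases hsign with h | h
    · exact ⟨v₀, hrep₀, h⟩
    · exact ⟨-v₀, by linear_combination hrep₀, by rwa [show u - -v₀ = u + v₀ by ring]⟩
  obtain ⟨b', hb'⟩ := hv₁d
  set a' : ℤ := v₁ + b' with ha'def
  have hu : u = a' + 2*b' := by omega
  have hv₁ : v₁ = a' - b' := by omega
  rw [hu, hv₁] at hv₁rep
  have hNr : 3*a'^2 + 6*b'^2 + 16*c₀^2 = N := by linear_combination - hv₁rep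
  have p_a := U8.sqmod8 a'
  have p_b := U8.sqmod8 b'
  have p_c := U8.sqmod8 c₀
  have ha2 : a' % 2 = 1 ∧ b' % 2 = 1 := by omega
  obtain ⟨xx, hxx⟩ : ∃ x : ℤ, a' = 2*x + 1 := ⟨(a'-1)/2, by omega⟩
  obtain ⟨yy, hyy⟩ : ∃ y : ℤ, b' = 2*y + 1 := ⟨(b'-1)/2, by omega⟩
  obtain ⟨zz, hzz⟩ : ∃ w : ℤ, c₀ = 3*w - 1 ∨ c₀ = 1 - 3*w := by
    have h3 : c₀ % 3 = 1 ∨ c₀ % 3 = 2 := by omega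
    rcases h3 with h | h
    · exact ⟨(1 - c₀)/3, Or.inr (by omega)⟩
    · exact ⟨(c₀+1)/3, Or.inl (by omega)⟩
  obtain ⟨k1, hk1⟩ := Int.even_mul_succ_self xx
  obtain ⟨k2, hk2⟩ := Int.even_mul_succ_self yy
  have h1c : xx^2 + xx = 2*k1 := by linear_combination hk1
  have h2c : yy^2 + yy = 2*k2 := by linear_combination hk2
  refine ⟨xx, yy, zz, ?_⟩
  rw [U8.poly3_val xx k1 h1c, U8.poly3_val yy k2 h2c, U8.poly8_val zz]
  have hNr' : 3*(2*xx+1)^2 + 6*(2*yy+1)^2 + 16*c₀^2 = N := by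
    rw [← hxx, ← hyy]; exact hNr
  have h24 : 24*(k1 + 2*k2 + 2*(3*zz^2 - 2*zz)) = 24*(n:ℤ) := by
    rcases hzz with h | h <;>
      · rw [h] at hNr'
        linear_combination hNr' - 12*h1c - 24*h2c + hNdef
  linarith
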